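/- arXiv:2406.08395 — 2 statements merged into one kernel-verified Lean document; each statement's English description precedes it below -/
import Mathlib

section
/- Let S be a nonempty finite set, let P be a nonempty set of probability mass functions on S, let c ∈ ℝ, let γ ∈ [0,1), and let V₁, V₂ : S → ℝ. Then |inf_{p ∈ P} (c + γ · Σ_{s ∈ S} p(s) · V₁(s)) − inf_{p ∈ P} (c + γ · Σ_{s ∈ S} p(s) · V₂(s))| ≤ γ · max_{s ∈ S} |V₁(s) − V₂(s)|. -/
lemma pmf_sum_toReal_eq_one {S : Type*} [Fintype S] (p : PMF S) :
    ∑ s : S, (p s).toReal = 1 := by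
  rw [← ENNReal.toReal_sum (fun s _ => PMF.apply_ne_top p s), ← tsum_fintype (L := .unconditional _), p.tsum_coe,
    ENNReal.toReal_one]

lemma sum_pmf_abs_le {S : Type*} [Fintype S] [Nonempty S] (p : PMF S) (W : S → ℝ) :
    |∑ s : S, (p s).toReal * W s| ≤ ⨆ s : S, |W s| := by
  have hM : ∀ s : S, |W s| ≤ ⨆ t : S, |W t| := fun s =>
    le_ciSup (f := fun t : S => |W t|) (Set.Finite.bddAbove (Set.finite_range _)) s
  calc |∑ s : S, (p s).toReal * W s| ≤ ∑ s : S, |(p s).toReal * W s| :=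
        Finset.abs_sum_le_sum_abs _ _
    _ = ∑ s : S, (p s).toReal * |W s| := by
        simp [abs_mul, abs_of_nonneg ENNReal.toReal_nonneg]
    _ ≤ ∑ s : S, (p s).toReal * (⨆ t : S, |W t|) :=
        Finset.sum_le_sum fun s _ => mul_le_mul_of_nonneg_left (hM s) ENNReal.toReal_nonneg
    _ = ⨆ t : S, |W t| := by rw [← Finset.sum_mul, pmf_sum_toReal_eq_one, one_mul]

/-- For a nonempty finite set `S`, a nonempty set `P` of probability mass
functions on `S`, a constant `c : ℝ`, a discount `γ ∈ [0,1)`, and functions `V₁ V₂ : S → ℝ`,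
the infima over `p ∈ P` of `c + γ · ∑ₛ p(s) V(s)` for `V = V₁, V₂` are at distance at most
`γ · max_{s ∈ S} |V₁ s - V₂ s|`. -/
theorem inf_expectation_abs_sub_le {S : Type*} [Fintype S] [Nonempty S]
    (P : Set (PMF S)) (hP : P.Nonempty)
    (c γ : ℝ) (hγ0 : 0 ≤ γ) (hγ1 : γ < 1)
    (V₁ V₂ : S → ℝ) :
    |sInf ((fun p : PMF S => c + γ * ∑ s : S, (p s).toReal * V₁ s) '' P) -
        sInf ((fun p : PMF S => c + γ * ∑ s : S, (p s).toReal * V₂ s) '' P)| ≤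
      γ * ⨆ s : S, |V₁ s - V₂ s| := by
  set M : ℝ := ⨆ s : S, |V₁ s - V₂ s| with hMdef
  set f₁ : PMF S → ℝ := fun p => c + γ * ∑ s : S, (p s).toReal * V₁ s with hf₁
  set f₂ : PMF S → ℝ := fun p => c + γ * ∑ s : S, (p s).toReal * V₂ s with hf₂
  have hkey : ∀ p : PMF S, |f₁ p - f₂ p| ≤ γ * M := by
    intro p
    have h : f₁ p - f₂ p = γ * ∑ s : S, (p s).toReal * (V₁ s - V₂ s) := by
      simp only [hf₁, hf₂, mul_sub]
      rw [Finset.sum_sub_distrib]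
      ring
    rw [h, abs_mul, abs_of_nonneg hγ0]
    exact mul_le_mul_of_nonneg_left (sum_pmf_abs_le p _) hγ0
  have hbdd : ∀ (V : S → ℝ),
      BddBelow ((fun p : PMF S => c + γ * ∑ s : S, (p s).toReal * V s) '' P) := by
    intro V
    refine ⟨c - γ * ⨆ s : S, |V s|, ?_⟩
    rintro x ⟨p, _, rfl⟩
    have h1 : -(⨆ s : S, |V s|) ≤ ∑ s : S, (p s).toReal * V s :=
      neg_le_of_abs_le (sum_pmf_abs_le p V)
    dsimp only
    nlinarith [mul_le_mul_of_nonneg_left h1 hγ0]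
  have hA := hbdd V₁
  have hB := hbdd V₂
  have hAne : (f₁ '' P).Nonempty := hP.image _
  have hBne : (f₂ '' P).Nonempty := hP.image _
  have h1 : sInf (f₁ '' P) - γ * M ≤ sInf (f₂ '' P) := by
    refine le_csInf hBne ?_
    rintro b ⟨p, hp, rfl⟩
    have h2 : sInf (f₁ '' P) ≤ f₁ p := csInf_le hA ⟨p, hp, rfl⟩
    have h3 := (abs_le.mp (hkey p)).2
    linarith
  have h2 : sInf (f₂ '' P) - γ * M ≤ sInf (f₁ '' P) := by
    refine le_csInf hAne ?_
    rintro b ⟨p, hp, rfl⟩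
    have h2 : sInf (f₂ '' P) ≤ f₂ p := csInf_le hB ⟨p, hp, rfl⟩
    have h3 := (abs_le.mp (hkey p)).1
    linarith
  rw [abs_sub_le_iff]
  constructor <;> linarith
end

section
/- Let S and A be nonempty finite sets, let γ ∈ [0,1), let π : S → PMF(A) be a policy, let ρ⁰ ∈ PMF(S), let P, Q : S → A → PMF(S) be two transition kernels, and let r₁, r₂ : S × A → ℝ be reward functions with values in [0,1]. Suppose there exist L_P ≥ 0 and L_r ≥ 0 such that for every s ∈ S and a ∈ A, Σ_{s' ∈ S} |P(s,a)(s') − Q(s,a)(s')| ≤ L_P and |r₁(s,a) − r₂(s,a)| ≤ L_r. Let J(π, K, r) = Σ_{k=0}^{∞} γ^k · Σ_s μ_k^K(s) · Σ_a π(s)(a) · r(s,a) denote the expected discounted return, where μ₀^K = ρ⁰ and μ_{k+1}^K(s') = Σ_s μ_k^K(s) · Σ_a π(s)(a) · K(s,a)(s'). Then |J(π, P, r₁) − J(π, Q, r₂)| ≤ L_r/(1−γ) + γ·L_P/(1−γ)². -/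
noncomputable section

/-- Policy-mixed one-step state-to-state kernel: `K^π(s'|s) = ∑_a π(s)(a) · K(s,a)(s')`. -/
def kerPi {S A : Type*} [Fintype A] (π : S → PMF A) (K : S → A → PMF S)
    (s s' : S) : ℝ :=
  ∑ a : A, ((π s) a).toReal * ((K s a) s').toReal

/-- State distribution at time step `k` under policy `π`, kernel `K` and initial
distribution `ρ`: `μ₀ = ρ`, `μ_{k+1}(s') = ∑_s μ_k(s) · ∑_a π(s)(a) · K(s,a)(s')`. -/
def stateDist {S A : Type*} [Fintype S] [Fintype A] (π : S → PMF A)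
    (K : S → A → PMF S) (ρ : PMF S) : ℕ → S → ℝ
  | 0 => fun s => (ρ s).toReal
  | (k + 1) => fun s' => ∑ s : S, stateDist π K ρ k s * kerPi π K s s'

/-- Discounted state occupancy measure `d^π(s) = (1-γ) ∑_{k≥0} γ^k μ_k(s)`. -/
def occ {S A : Type*} [Fintype S] [Fintype A] (γ : ℝ) (π : S → PMF A)
    (K : S → A → PMF S) (ρ : PMF S) (s : S) : ℝ :=
  (1 - γ) * ∑' k : ℕ, γ ^ k * stateDist π K ρ k s

/-- Expected discounted return
`J(π, K, r) = ∑_{k≥0} γ^k ∑_s μ_k(s) ∑_a π(s)(a) r(s,a)`. -/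
def ret {S A : Type*} [Fintype S] [Fintype A] (γ : ℝ) (π : S → PMF A)
    (K : S → A → PMF S) (ρ : PMF S) (r : S × A → ℝ) : ℝ :=
  ∑' k : ℕ, γ ^ k * ∑ s : S, stateDist π K ρ k s * ∑ a : A, ((π s) a).toReal * r (s, a)

lemma pmf_sum_toReal {X : Type*} [Fintype X] (p : PMF X) : ∑ x : X, (p x).toReal = 1 := by
  rw [← ENNReal.toReal_sum (fun x _ => PMF.apply_ne_top p x), ← tsum_fintype (L := SummationFilter.unconditional X), PMF.tsum_coe,
    ENNReal.toReal_one]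

lemma kerPi_nonneg {S A : Type*} [Fintype A] (π : S → PMF A) (K : S → A → PMF S)
    (s s' : S) : 0 ≤ kerPi π K s s' :=
  Finset.sum_nonneg fun _ _ => mul_nonneg ENNReal.toReal_nonneg ENNReal.toReal_nonneg

lemma kerPi_sum_one {S A : Type*} [Fintype S] [Fintype A] (π : S → PMF A)
    (K : S → A → PMF S) (s : S) : ∑ s' : S, kerPi π K s s' = 1 := by
  unfold kerPi
  rw [Finset.sum_comm]
  simp_rw [← Finset.mul_sum, pmf_sum_toReal, mul_one]
  exact pmf_sum_toReal (π s)

lemma stateDist_nonneg {S A : Type*} [Fintype S] [Fintype A] (π : S → PMF A)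
    (K : S → A → PMF S) (ρ : PMF S) : ∀ k s, 0 ≤ stateDist π K ρ k s := by
  intro k
  induction k with
  | zero => intro s; exact ENNReal.toReal_nonneg
  | succ k ih =>
    intro s'
    exact Finset.sum_nonneg fun s _ => mul_nonneg (ih s) (kerPi_nonneg π K s s')

lemma stateDist_sum_one {S A : Type*} [Fintype S] [Fintype A] (π : S → PMF A)
    (K : S → A → PMF S) (ρ : PMF S) : ∀ k, ∑ s : S, stateDist π K ρ k s = 1 := by
  intro k
  induction k with
  | zero => exact pmf_sum_toReal ρ
  | succ k ih =>
    show ∑ s' : S, ∑ s : S, stateDist π K ρ k s * kerPi π K s s' = 1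
    rw [Finset.sum_comm]
    simp_rw [← Finset.mul_sum, kerPi_sum_one, mul_one]
    exact ih

/-- One-step simulation bound: if the kernels differ by at most `L_P` in
per-(s,a) ℓ₁ distance and the `[0,1]`-valued rewards by at most `L_r` pointwise, then the
expected discounted returns differ by at most `L_r/(1-γ) + γ L_P/(1-γ)²`. -/
theorem ret_abs_sub_le {S A : Type*} [Fintype S] [Fintype A] [Nonempty S] [Nonempty A]
    (γ : ℝ) (hγ0 : 0 ≤ γ) (hγ1 : γ < 1)
    (π : S → PMF A) (ρ : PMF S)
    (P Q : S → A → PMF S) (r₁ r₂ : S × A → ℝ)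
    (hr₁ : ∀ x, r₁ x ∈ Set.Icc (0 : ℝ) 1) (hr₂ : ∀ x, r₂ x ∈ Set.Icc (0 : ℝ) 1)
    (L_P L_r : ℝ) (hLP : 0 ≤ L_P) (hLr : 0 ≤ L_r)
    (hP : ∀ s : S, ∀ a : A, ∑ s' : S, |((P s a) s').toReal - ((Q s a) s').toReal| ≤ L_P)
    (hr : ∀ s : S, ∀ a : A, |r₁ (s, a) - r₂ (s, a)| ≤ L_r) :
    |ret γ π P ρ r₁ - ret γ π Q ρ r₂| ≤ L_r / (1 - γ) + γ * L_P / (1 - γ) ^ 2 := by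
  have h1γ : (0:ℝ) < 1 - γ := by linarith
  set μP := stateDist π P ρ with hμP
  set μQ := stateDist π Q ρ with hμQ
  set R₁ : S → ℝ := fun s => ∑ a : A, ((π s) a).toReal * r₁ (s, a) with hR₁def
  set R₂ : S → ℝ := fun s => ∑ a : A, ((π s) a).toReal * r₂ (s, a) with hR₂def
  have hRmem : ∀ (r : S × A → ℝ), (∀ x, r x ∈ Set.Icc (0:ℝ) 1) → ∀ s : S,
      (∑ a : A, ((π s) a).toReal * r (s, a)) ∈ Set.Icc (0:ℝ) 1 := by
    intro r hrm s
    constructor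
    · exact Finset.sum_nonneg fun a _ => mul_nonneg ENNReal.toReal_nonneg (hrm (s, a)).1
    · calc ∑ a : A, ((π s) a).toReal * r (s, a)
          ≤ ∑ a : A, ((π s) a).toReal * 1 :=
            Finset.sum_le_sum fun a _ =>
              mul_le_mul_of_nonneg_left (hrm (s, a)).2 ENNReal.toReal_nonneg
        _ = 1 := by simp [pmf_sum_toReal]
  have hR₁m := hRmem r₁ hr₁
  have hR₂m := hRmem r₂ hr₂
  have hRdiff : ∀ s : S, |R₁ s - R₂ s| ≤ L_r := by
    intro s
    rw [hR₁def, hR₂def]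
    simp only
    rw [← Finset.sum_sub_distrib]
    refine (Finset.abs_sum_le_sum_abs _ _).trans ?_
    calc ∑ a : A, |((π s) a).toReal * r₁ (s, a) - ((π s) a).toReal * r₂ (s, a)|
        = ∑ a : A, ((π s) a).toReal * |r₁ (s, a) - r₂ (s, a)| := by
          refine Finset.sum_congr rfl fun a _ => ?_
          rw [← mul_sub, abs_mul, abs_of_nonneg ENNReal.toReal_nonneg]
      _ ≤ ∑ a : A, ((π s) a).toReal * L_r :=
          Finset.sum_le_sum fun a _ =>
            mul_le_mul_of_nonneg_left (hr s a) ENNReal.toReal_nonneg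
      _ = L_r := by rw [← Finset.sum_mul, pmf_sum_toReal, one_mul]
  -- kernel difference bound
  have hker : ∀ s : S, ∑ s' : S, |kerPi π P s s' - kerPi π Q s s'| ≤ L_P := by
    intro s
    calc ∑ s' : S, |kerPi π P s s' - kerPi π Q s s'|
        ≤ ∑ s' : S, ∑ a : A, ((π s) a).toReal * |((P s a) s').toReal - ((Q s a) s').toReal| := by
          refine Finset.sum_le_sum fun s' _ => ?_
          unfold kerPi
          rw [← Finset.sum_sub_distrib]
          refine (Finset.abs_sum_le_sum_abs _ _).trans (le_of_eq ?_)
          refine Finset.sum_congr rfl fun a _ => ?_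
          rw [← mul_sub, abs_mul, abs_of_nonneg ENNReal.toReal_nonneg]
      _ = ∑ a : A, ((π s) a).toReal * ∑ s' : S, |((P s a) s').toReal - ((Q s a) s').toReal| := by
          rw [Finset.sum_comm]; simp_rw [Finset.mul_sum]
      _ ≤ ∑ a : A, ((π s) a).toReal * L_P :=
          Finset.sum_le_sum fun a _ =>
            mul_le_mul_of_nonneg_left (hP s a) ENNReal.toReal_nonneg
      _ = L_P := by rw [← Finset.sum_mul, pmf_sum_toReal, one_mul]
  -- total variation growth bound
  have hD : ∀ k : ℕ, ∑ s : S, |μP k s - μQ k s| ≤ (k : ℝ) * L_P := by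
    intro k
    induction k with
    | zero => simp [hμP, hμQ, stateDist]
    | succ k ih =>
      have step : ∑ s' : S, |μP (k+1) s' - μQ (k+1) s'|
          ≤ (∑ s : S, |μP k s - μQ k s|) + L_P := by
        calc ∑ s' : S, |μP (k+1) s' - μQ (k+1) s'|
            ≤ ∑ s' : S, ∑ s : S, (|μP k s - μQ k s| * kerPi π P s s'
                + μQ k s * |kerPi π P s s' - kerPi π Q s s'|) := by
              refine Finset.sum_le_sum fun s' _ => ?_
              show |(∑ s : S, μP k s * kerPi π P s s') - ∑ s : S, μQ k s * kerPi π Q s s'| ≤ _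
              rw [← Finset.sum_sub_distrib]
              refine (Finset.abs_sum_le_sum_abs _ _).trans
                (Finset.sum_le_sum fun s _ => ?_)
              have hrw : μP k s * kerPi π P s s' - μQ k s * kerPi π Q s s'
                  = (μP k s - μQ k s) * kerPi π P s s'
                    + μQ k s * (kerPi π P s s' - kerPi π Q s s') := by ring
              rw [hrw]
              refine (abs_add_le _ _).trans (le_of_eq ?_)
              rw [abs_mul, abs_mul, abs_of_nonneg (kerPi_nonneg π P s s'),
                abs_of_nonneg (stateDist_nonneg π Q ρ k s)]
          _ = ∑ s : S, (|μP k s - μQ k s| * ∑ s' : S, kerPi π P s s'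
                + μQ k s * ∑ s' : S, |kerPi π P s s' - kerPi π Q s s'|) := by
              rw [Finset.sum_comm]
              simp_rw [Finset.sum_add_distrib, Finset.mul_sum]
          _ ≤ ∑ s : S, (|μP k s - μQ k s| * 1 + μQ k s * L_P) := by
              refine Finset.sum_le_sum fun s _ => ?_
              refine add_le_add ?_ ?_
              · rw [kerPi_sum_one]
              · exact mul_le_mul_of_nonneg_left (hker s) (stateDist_nonneg π Q ρ k s)
          _ = (∑ s : S, |μP k s - μQ k s|) + L_P := by
              rw [Finset.sum_add_distrib]
              simp_rw [mul_one]
              rw [← Finset.sum_mul, stateDist_sum_one, one_mul]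
      calc ∑ s' : S, |μP (k+1) s' - μQ (k+1) s'| ≤ (∑ s : S, |μP k s - μQ k s|) + L_P := step
        _ ≤ (k : ℝ) * L_P + L_P := by linarith
        _ = ((k+1 : ℕ) : ℝ) * L_P := by push_cast; ring
  -- the series terms
  set f : ℕ → ℝ := fun k => γ ^ k * ∑ s : S, μP k s * R₁ s with hfdef
  set g : ℕ → ℝ := fun k => γ ^ k * ∑ s : S, μQ k s * R₂ s with hgdef
  have habsle : ∀ (μ : ℕ → S → ℝ), (∀ k s, 0 ≤ μ k s) → (∀ k, ∑ s : S, μ k s = 1) →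
      ∀ (R : S → ℝ), (∀ s, R s ∈ Set.Icc (0:ℝ) 1) →
      ∀ k, |γ ^ k * ∑ s : S, μ k s * R s| ≤ γ ^ k := by
    intro μ hnn hsum R hRm k
    rw [abs_mul, abs_of_nonneg (pow_nonneg hγ0 k)]
    have h0 : 0 ≤ ∑ s : S, μ k s * R s :=
      Finset.sum_nonneg fun s _ => mul_nonneg (hnn k s) (hRm s).1
    have h1 : ∑ s : S, μ k s * R s ≤ 1 := by
      calc ∑ s : S, μ k s * R s ≤ ∑ s : S, μ k s * 1 :=
            Finset.sum_le_sum fun s _ => mul_le_mul_of_nonneg_left (hRm s).2 (hnn k s)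
        _ = 1 := by simp [hsum k]
    rw [abs_of_nonneg h0]
    calc γ ^ k * ∑ s : S, μ k s * R s ≤ γ ^ k * 1 :=
          mul_le_mul_of_nonneg_left h1 (pow_nonneg hγ0 k)
      _ = γ ^ k := mul_one _
  have hγnorm : ‖γ‖ < 1 := by rw [Real.norm_eq_abs, abs_of_nonneg hγ0]; exact hγ1
  have hgeo : Summable (fun k : ℕ => γ ^ k) := summable_geometric_of_lt_one hγ0 hγ1
  have hfabsbd := habsle μP (fun k s => stateDist_nonneg π P ρ k s)
    (stateDist_sum_one π P ρ) R₁ hR₁m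
  have hgabsbd := habsle μQ (fun k s => stateDist_nonneg π Q ρ k s)
    (stateDist_sum_one π Q ρ) R₂ hR₂m
  have hf : Summable f := by
    refine Summable.of_norm_bounded hgeo fun k => ?_
    rw [Real.norm_eq_abs]; exact hfabsbd k
  have hg : Summable g := by
    refine Summable.of_norm_bounded hgeo fun k => ?_
    rw [Real.norm_eq_abs]; exact hgabsbd k
  -- termwise bound
  have hterm : ∀ k : ℕ, |f k - g k| ≤ γ ^ k * ((k : ℝ) * L_P + L_r) := by
    intro k
    rw [hfdef, hgdef]
    simp only
    rw [← mul_sub, abs_mul, abs_of_nonneg (pow_nonneg hγ0 k)]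
    refine mul_le_mul_of_nonneg_left ?_ (pow_nonneg hγ0 k)
    have hrw : (∑ s : S, μP k s * R₁ s) - ∑ s : S, μQ k s * R₂ s
        = (∑ s : S, (μP k s - μQ k s) * R₁ s) + ∑ s : S, μQ k s * (R₁ s - R₂ s) := by
      rw [← Finset.sum_add_distrib, ← Finset.sum_sub_distrib]
      exact Finset.sum_congr rfl fun s _ => by ring
    rw [hrw]
    refine (abs_add_le _ _).trans ?_
    have hA : |∑ s : S, (μP k s - μQ k s) * R₁ s| ≤ (k : ℝ) * L_P := by
      refine (Finset.abs_sum_le_sum_abs _ _).trans ?_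
      refine le_trans ?_ (hD k)
      refine Finset.sum_le_sum fun s _ => ?_
      rw [abs_mul]
      calc |μP k s - μQ k s| * |R₁ s| ≤ |μP k s - μQ k s| * 1 := by
            refine mul_le_mul_of_nonneg_left ?_ (abs_nonneg _)
            rw [abs_of_nonneg (hR₁m s).1]; exact (hR₁m s).2
        _ = |μP k s - μQ k s| := mul_one _
    have hB : |∑ s : S, μQ k s * (R₁ s - R₂ s)| ≤ L_r := by
      refine (Finset.abs_sum_le_sum_abs _ _).trans ?_
      calc ∑ s : S, |μQ k s * (R₁ s - R₂ s)|
          ≤ ∑ s : S, μQ k s * L_r := by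
            refine Finset.sum_le_sum fun s _ => ?_
            rw [abs_mul, abs_of_nonneg (stateDist_nonneg π Q ρ k s)]
            exact mul_le_mul_of_nonneg_left (hRdiff s) (stateDist_nonneg π Q ρ k s)
        _ = L_r := by rw [← Finset.sum_mul, stateDist_sum_one, one_mul]
    linarith
  -- the dominating series
  have hsum1 : Summable (fun k : ℕ => (k : ℝ) * γ ^ k) := by
    have := summable_pow_mul_geometric_of_norm_lt_one (R := ℝ) 1 hγnorm
    simpa using this
  have hc : Summable (fun k : ℕ => γ ^ k * ((k : ℝ) * L_P + L_r)) := by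
    have : (fun k : ℕ => γ ^ k * ((k : ℝ) * L_P + L_r))
        = fun k : ℕ => L_P * ((k : ℝ) * γ ^ k) + L_r * γ ^ k := by
      funext k; ring
    rw [this]
    exact ((hsum1.mul_left L_P).add (hgeo.mul_left L_r))
  have hcval : ∑' k : ℕ, γ ^ k * ((k : ℝ) * L_P + L_r)
      = L_r / (1 - γ) + γ * L_P / (1 - γ) ^ 2 := by
    have h1 : ∑' k : ℕ, γ ^ k = (1 - γ)⁻¹ := tsum_geometric_of_lt_one hγ0 hγ1
    have h2 : ∑' k : ℕ, (k : ℝ) * γ ^ k = γ / (1 - γ) ^ 2 :=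
      tsum_coe_mul_geometric_of_norm_lt_one hγnorm
    calc ∑' k : ℕ, γ ^ k * ((k : ℝ) * L_P + L_r)
        = ∑' k : ℕ, (L_P * ((k : ℝ) * γ ^ k) + L_r * γ ^ k) := by
          refine tsum_congr fun k => by ring
      _ = L_P * (γ / (1 - γ) ^ 2) + L_r * (1 - γ)⁻¹ := by
          rw [Summable.tsum_add (hsum1.mul_left L_P) (hgeo.mul_left L_r),
            tsum_mul_left, tsum_mul_left, h1, h2]
      _ = L_r / (1 - γ) + γ * L_P / (1 - γ) ^ 2 := by
          field_simp; ring
  have hfg : Summable (fun k => |f k - g k|) := by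
    refine Summable.of_nonneg_of_le (fun k => abs_nonneg _) hterm hc
  have hretP : ret γ π P ρ r₁ = ∑' k, f k := rfl
  have hretQ : ret γ π Q ρ r₂ = ∑' k, g k := rfl
  rw [hretP, hretQ, ← Summable.tsum_sub hf hg]
  calc |∑' k : ℕ, (f k - g k)| ≤ ∑' k : ℕ, |f k - g k| := by
        have := norm_tsum_le_tsum_norm (f := fun k => f k - g k) (by simpa using hfg)
        simpa using this
    _ ≤ ∑' k : ℕ, γ ^ k * ((k : ℝ) * L_P + L_r) := Summable.tsum_le_tsum hterm hfg hc
    _ = L_r / (1 - γ) + γ * L_P / (1 - γ) ^ 2 := hcval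
end
end
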